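/- On a real Hilbert space H with unitary structure J (orthogonal, J² = -1) and another unitary structure K, write the identity in block form with respect to the ±i-eigenspace decompositions of the complexifications. Then the off-diagonal blocks b = ¼(I - iK)(I + iJ)P can be rewritten as ¼(K(J - K) + i(J - K))P; hence if J - K is Hilbert-Schmidt then the off-diagonal blocks are Hilbert-Schmidt. -/

import Mathlib

/-- An operator on a Hilbert space is Hilbert-Schmidt if `Σᵢ ‖Teᵢ‖² < ∞` for (every)
Hilbert basis. -/
def IsHilbertSchmidt {H : Type*} [NormedAddCommGroup H] [InnerProductSpace ℂ H]
    (T : H →L[ℂ] H) : Prop :=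
  ∀ (ι : Type) (b : HilbertBasis ι ℂ H), Summable fun i => ‖T (b i)‖ ^ 2

open ContinuousLinearMap in
lemma parseval_hs {H : Type*} [NormedAddCommGroup H] [InnerProductSpace ℂ H] [CompleteSpace H]
    {ι : Type} (b : HilbertBasis ι ℂ H) (x : H) :
    HasSum (fun i => ‖(inner ℂ (b i) x : ℂ)‖ ^ 2) (‖x‖ ^ 2) := by
  have h := (b.hasSum_inner_mul_inner x x).mapL (Complex.reCLM)
  have hx : Complex.reCLM (inner ℂ x x : ℂ) = ‖x‖ ^ 2 := by
    rw [← inner_self_eq_norm_sq (𝕜 := ℂ)]; simp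
  rw [hx] at h
  convert h using 2 with i
  rw [← inner_conj_symm x (b i), ← Complex.normSq_eq_conj_mul_self]
  simp only [Complex.reCLM_apply, Complex.ofReal_re, Complex.normSq_eq_norm_sq]

lemma sum_sq_adjoint {H : Type*} [NormedAddCommGroup H] [InnerProductSpace ℂ H]
    [CompleteSpace H] {ι : Type} (b : HilbertBasis ι ℂ H) (T : H →L[ℂ] H)
    (hT : Summable fun i => ‖T (b i)‖ ^ 2) :
    Summable fun i => ‖ContinuousLinearMap.adjoint T (b i)‖ ^ 2 := by
  set f : ι × ι → ℝ := fun p => ‖(inner ℂ (b p.2) (T (b p.1)) : ℂ)‖ ^ 2 with hf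
  have hf0 : 0 ≤ f := fun p => by positivity
  have hrow : ∀ i, HasSum (fun j => f (i, j)) (‖T (b i)‖ ^ 2) := fun i =>
    parseval_hs b (T (b i))
  have hfsum : Summable f := by
    refine (summable_prod_of_nonneg hf0).2 ⟨fun i => (hrow i).summable, ?_⟩
    refine hT.congr fun i => ((hrow i).tsum_eq).symm
  have hswap : Summable (f ∘ Prod.swap) := ((Equiv.prodComm ι ι).summable_iff).2 hfsum
  have hcol : Summable fun j => ∑' i, f (i, j) := by
    have := (summable_prod_of_nonneg (f := f ∘ Prod.swap) (fun p => hf0 p.swap)).1 hswap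
    exact this.2
  refine hcol.congr fun j => ?_
  have hps := parseval_hs b (ContinuousLinearMap.adjoint T (b j))
  rw [← hps.tsum_eq]
  refine tsum_congr fun i => ?_
  rw [ContinuousLinearMap.adjoint_inner_right, ← norm_inner_symm]

lemma sum_sq_left {H : Type*} [NormedAddCommGroup H] [InnerProductSpace ℂ H]
    [CompleteSpace H] {ι : Type} (b : HilbertBasis ι ℂ H) (A T : H →L[ℂ] H)
    (hT : Summable fun i => ‖T (b i)‖ ^ 2) :
    Summable fun i => ‖(A * T) (b i)‖ ^ 2 := by
  refine Summable.of_nonneg_of_le (fun i => by positivity)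
    (fun i => ?_) (hT.mul_left (‖A‖ ^ 2))
  have h : ‖A (T (b i))‖ ≤ ‖A‖ * ‖T (b i)‖ := A.le_opNorm _
  calc ‖(A * T) (b i)‖ ^ 2 = ‖A (T (b i))‖ ^ 2 := rfl
    _ ≤ (‖A‖ * ‖T (b i)‖) ^ 2 := by
        apply pow_le_pow_left₀ (norm_nonneg _) h
    _ = ‖A‖ ^ 2 * ‖T (b i)‖ ^ 2 := by ring

lemma sum_sq_right {H : Type*} [NormedAddCommGroup H] [InnerProductSpace ℂ H]
    [CompleteSpace H] {ι : Type} (b : HilbertBasis ι ℂ H) (T B : H →L[ℂ] H)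
    (hT : Summable fun i => ‖T (b i)‖ ^ 2) :
    Summable fun i => ‖(T * B) (b i)‖ ^ 2 := by
  have h1 := sum_sq_adjoint b T hT
  have h2 := sum_sq_left b (ContinuousLinearMap.adjoint B) _ h1
  have h3 := sum_sq_adjoint b _ h2
  have key2 : ContinuousLinearMap.adjoint
      (ContinuousLinearMap.adjoint B * ContinuousLinearMap.adjoint T) = T * B := by
    have h : ContinuousLinearMap.adjoint B * ContinuousLinearMap.adjoint T =
        ContinuousLinearMap.adjoint (T * B) := by
      show _ = ContinuousLinearMap.adjoint (T.comp B)
      rw [ContinuousLinearMap.adjoint_comp]; rfl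
    rw [h, ContinuousLinearMap.adjoint_adjoint]
  exact h3.congr fun i => by rw [key2]

theorem stmt_18 (H : Type*) [NormedAddCommGroup H] [InnerProductSpace ℂ H] [CompleteSpace H]
    (J K P : H →L[ℂ] H)
    (hJa : ContinuousLinearMap.adjoint J = -J) (hKa : ContinuousLinearMap.adjoint K = -K)
    (hJ2 : J * J = -1) (hK2 : K * K = -1) (hP : P * P = P) :
    (1 / 4 : ℂ) • ((1 - Complex.I • K) * (1 + Complex.I • J) * P) =
      (1 / 4 : ℂ) • ((K * (J - K) + Complex.I • (J - K)) * P) ∧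
    (IsHilbertSchmidt (J - K) →
      IsHilbertSchmidt ((1 / 4 : ℂ) • ((1 - Complex.I • K) * (1 + Complex.I • J) * P))) := by
  have key : (1 - Complex.I • K) * (1 + Complex.I • J) =
      (K * (J - K) + Complex.I • (J - K)) := by
    have hI : (Complex.I • K) * (Complex.I • J) = -(K * J) := by
      rw [smul_mul_smul_comm]
      simp [Complex.I_mul_I]
    rw [sub_mul, mul_add, mul_add, one_mul, one_mul, mul_one, hI]
    rw [mul_sub, smul_sub, hK2]
    abel
  refine ⟨by rw [key], fun hHS => ?_⟩
  rw [key]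
  intro ι b
  have h0 : Summable fun i => ‖(J - K) (b i)‖ ^ 2 := hHS ι b
  have h1 : Summable fun i => ‖(((1 / 4 : ℂ) • (K + Complex.I • 1)) * (J - K) * P) (b i)‖ ^ 2 :=
    sum_sq_right b _ P (sum_sq_left b _ _ h0)
  have e : ((1 / 4 : ℂ) • (K + Complex.I • 1)) * (J - K) * P =
      (1 / 4 : ℂ) • ((K * (J - K) + Complex.I • (J - K)) * P) := by
    rw [smul_mul_assoc, smul_mul_assoc, add_mul, smul_mul_assoc, one_mul]
  exact h1.congr fun i => by rw [e]
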